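/- The Lie algebra of derivations of the 4-dimensional complex algebra B⁴₁₀ (with nonzero products e₁e₂ = e₃, e₁e₃ = e₄, e₂e₁ = e₄, e₃e₂ = e₄) has dimension 2. -/
import Mathlib

noncomputable def mB410 : (Fin 4 → ℂ) →ₗ[ℂ] (Fin 4 → ℂ) →ₗ[ℂ] (Fin 4 → ℂ) :=
  LinearMap.mk₂ ℂ (fun u v => ![0, 0, u 0 * v 1, u 0 * v 2 + u 1 * v 0 + u 2 * v 1])
    (fun x y v => by funext i; fin_cases i <;> simp <;> ring)
    (fun a x v => by funext i; fin_cases i <;> simp <;> ring)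
    (fun u x y => by funext i; fin_cases i <;> simp <;> ring)
    (fun u a x => by funext i; fin_cases i <;> simp <;> ring)

/-- The space of derivations of an algebra `(V, μ)`. -/
noncomputable def ders {V : Type*} [AddCommGroup V] [Module ℂ V]
    (μ : V →ₗ[ℂ] V →ₗ[ℂ] V) : Submodule ℂ (V →ₗ[ℂ] V) where
  carrier := {D | ∀ x y, D (μ x y) = μ (D x) y + μ x (D y)}
  add_mem' := by
    intro a b ha hb x y
    simp only [LinearMap.add_apply, ha x y, hb x y, map_add, LinearMap.add_apply]
    abel
  zero_mem' := by intro x y; simp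
  smul_mem' := by
    intro c D hD x y
    simp only [LinearMap.smul_apply, hD x y, map_smul, smul_add, LinearMap.smul_apply]

noncomputable def Dab (a b : ℂ) : (Fin 4 → ℂ) →ₗ[ℂ] (Fin 4 → ℂ) where
  toFun u := ![0, 0, 0, a * u 0 + b * u 1]
  map_add' x y := by funext i; fin_cases i <;> simp <;> ring
  map_smul' c x := by funext i; fin_cases i <;> simp <;> ring

lemma Dab_mem (a b : ℂ) : Dab a b ∈ ders mB410 := by
  intro x y; funext i; fin_cases i <;> simp [Dab, mB410]

lemma ders_eq_span : ders mB410 = Submodule.span ℂ {Dab 1 0, Dab 0 1} := by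
  apply le_antisymm
  · intro D hD
    rw [Submodule.mem_span_pair]
    refine ⟨D ![1,0,0,0] 3, D ![0,1,0,0] 3, ?_⟩
    have hz : (![0,0,0,0] : Fin 4 → ℂ) = 0 := by funext i; fin_cases i <;> simp
    have h01 := hD ![1,0,0,0] ![0,1,0,0]
    have h02 := hD ![1,0,0,0] ![0,0,1,0]
    have h10 := hD ![0,1,0,0] ![1,0,0,0]
    have h21 := hD ![0,0,1,0] ![0,1,0,0]
    have h00 := hD ![1,0,0,0] ![1,0,0,0]
    have h11 := hD ![0,1,0,0] ![0,1,0,0]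
    simp [mB410, hz] at h01 h02 h10 h21 h00 h11
    -- extract scalar equations
    have e00_2 := congrFun h00 2
    have e00_3 := congrFun h00 3
    have e11_2 := congrFun h11 2
    have e11_3 := congrFun h11 3
    have e01_0 := congrFun h01 0
    have e01_1 := congrFun h01 1
    have e01_2 := congrFun h01 2
    have e01_3 := congrFun h01 3
    have e10_0 := congrFun h10 0
    have e10_1 := congrFun h10 1
    have e10_2 := congrFun h10 2
    have e10_3 := congrFun h10 3
    have e02_3 := congrFun h02 3
    have e21_3 := congrFun h21 3
    simp at e00_2 e00_3 e11_2 e11_3 e01_0 e01_1 e01_2 e01_3 e10_0 e10_1 e10_2 e10_3 e02_3 e21_3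
    -- derive entries
    have a10 : D ![1,0,0,0] 1 = 0 := by linear_combination -e00_2
    have a20 : D ![1,0,0,0] 2 = 0 := by linear_combination e00_2 - e00_3
    have a01 : D ![0,1,0,0] 0 = 0 := by linear_combination -e11_2
    have a21 : D ![0,1,0,0] 2 = 0 := by linear_combination e11_2 - e11_3
    have a00 : D ![1,0,0,0] 0 = 0 := by linear_combination e10_3 - e02_3 - e01_2
    have a11 : D ![0,1,0,0] 1 = 0 := by linear_combination e10_3 - e21_3 - e01_2
    have hDe2 : D ![0,0,1,0] = 0 := by
      rw [h01]; funext i; fin_cases i <;> simp [a00, a11, a20, a21]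
    have hDe3 : D ![0,0,0,1] = 0 := by
      rw [h10]; funext i; fin_cases i <;> simp [a00, a11]
    apply LinearMap.ext
    intro u
    have hu : u = u 0 • ![1,0,0,0] + u 1 • ![0,1,0,0] + u 2 • ![0,0,1,0] + u 3 • ![0,0,0,1] := by
      funext i; fin_cases i <;> simp
    rw [hu]
    simp only [map_add, map_smul, hDe2, hDe3, LinearMap.add_apply, LinearMap.smul_apply]
    funext i
    fin_cases i <;> simp [Dab, a00, a10, a20, a01, a11, a21] <;> ring
  · rw [Submodule.span_le]
    rintro x hx
    rcases hx with rfl | rfl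
    · exact Dab_mem 1 0
    · exact Dab_mem 0 1

/-- The Lie algebra of derivations of `B⁴₁₀` has dimension `2`. -/
theorem B410_derivations_dim_two : Module.finrank ℂ (ders mB410) = 2 := by
  rw [ders_eq_span]
  have hli : LinearIndependent ℂ ![Dab 1 0, Dab 0 1] := by
    rw [LinearIndependent.pair_iff]
    intro s t h
    constructor
    · have := congrFun (LinearMap.congr_fun h ![1,0,0,0]) 3
      simpa [Dab] using this
    · have := congrFun (LinearMap.congr_fun h ![0,1,0,0]) 3
      simpa [Dab] using this
  have hr : ({Dab 1 0, Dab 0 1} : Set _) = Set.range ![Dab 1 0, Dab 0 1] := by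
    ext x
    simp [Fin.exists_fin_two, eq_comm]
    tauto
  rw [hr, finrank_span_eq_card hli]
  simp
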